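/- Let G be a finite, simple, connected, undirected graph on n vertices, weighted with the minimum-degree weighting scheme. Then for every pair of vertices u, v, the hitting time of the weighted random walk satisfies H[u,v] ≤ 6n². -/

import Mathlib

open Finset Filter Classical
open scoped ENNReal

noncomputable section

variable {V : Type*} [Fintype V] [DecidableEq V]

/-- Degree of a vertex in a simple graph. -/
def gdeg (G : SimpleGraph V) (u : V) : ℕ :=
  (Finset.univ.filter (fun v => G.Adj u v)).card

/-- Transition probabilities of the simple random walk on `G`. -/
def srw (G : SimpleGraph V) (u v : V) : ℝ :=
  if G.Adj u v then ((gdeg G u : ℝ))⁻¹ else 0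

/-- Probability weight of a trajectory under the transition kernel `P`. -/
def stepWeight (P : V → V → ℝ) {t : ℕ} (f : Fin (t + 1) → V) : ℝ :=
  ∏ i : Fin t, P (f i.castSucc) (f i.succ)

/-- Probability that the `t`-step trajectory of the chain `P` started at `u`
satisfies the predicate `A`. -/
def eventProb (P : V → V → ℝ) (u : V) (t : ℕ) (A : (Fin (t + 1) → V) → Prop) : ℝ :=
  ∑ f : Fin (t + 1) → V, if f 0 = u ∧ A f then stepWeight P f else 0

/-- Expected hitting time `H[u,v]`, via `E[T] = ∑_t Pr(T > t)`. -/
def hitTime (P : V → V → ℝ) (u v : V) : ℝ≥0∞ :=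
  ∑' t : ℕ, ENNReal.ofReal (eventProb P u t (fun f => ∀ i, f i ≠ v))

/-- Expected cover time starting from `u`. -/
def coverTimeFrom (P : V → V → ℝ) (u : V) : ℝ≥0∞ :=
  ∑' t : ℕ, ENNReal.ofReal (eventProb P u t (fun f => ∃ v, ∀ i, f i ≠ v))

/-- The cover time `COV`: maximum over starting vertices of the expected cover time. -/
def coverTime (P : V → V → ℝ) : ℝ≥0∞ := ⨆ u, coverTimeFrom P u

/-- Stationary probability of `v` for the simple random walk: `d(v)/(2|E|)`. -/
def statPi (G : SimpleGraph V) (v : V) : ℝ := (gdeg G v : ℝ) / (∑ u, (gdeg G u : ℝ))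

/-- Number of visits to `w` in a trajectory. -/
def visits {t : ℕ} (f : Fin (t + 1) → V) (w : V) : ℕ :=
  (Finset.univ.filter (fun i => f i = w)).card

/-- The blanket-cover time `BCOV[G]`. -/
def blanketCoverTime (G : SimpleGraph V) : ℝ≥0∞ :=
  ⨆ u, ∑' t : ℕ, ENNReal.ofReal (eventProb (srw G) u t
    (fun f => ∃ w, (visits f w : ℝ≥0∞) < ENNReal.ofReal (statPi G w) * coverTime (srw G)))

/-- Minimum degree. -/
def minDeg (G : SimpleGraph V) : ℕ := sInf (Set.range (gdeg G))

/-- Maximum degree. -/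
def maxDeg (G : SimpleGraph V) : ℕ := Finset.univ.sup (gdeg G)

/-- Number of edges (by the handshaking lemma). -/
def edgeCount (G : SimpleGraph V) : ℕ := (∑ v, gdeg G v) / 2

/-- Diameter. -/
def gdiam (G : SimpleGraph V) : ℕ := Finset.univ.sup (fun p : V × V => G.dist p.1 p.2)

/-- Effective resistance between `u` and `v`, all edges having unit resistance:
the reciprocal of the effective conductance, the latter given by the Dirichlet
variational principle. -/
def effRes (G : SimpleGraph V) (u v : V) : ℝ :=
  (sInf {e : ℝ | ∃ f : V → ℝ, f u = 1 ∧ f v = 0 ∧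
      e = (∑ x, ∑ y, if G.Adj x y then (f x - f y) ^ 2 else 0) / 2})⁻¹

/-- Maximum effective resistance over pairs of vertices. -/
def Rmax (G : SimpleGraph V) : ℝ := sSup {r : ℝ | ∃ u v, r = effRes G u v}


/-- Transition probability of the weighted random walk on the weighted graph `(G, w)`:
`P_{u,v} = w(u,v)/w(u)`. -/
def wP (G : SimpleGraph V) (w : V → V → ℝ) (u v : V) : ℝ :=
  (if G.Adj u v then w u v else 0) / (∑ x, if G.Adj u x then w u x else 0)

/-- The minimum-degree weighting scheme: each edge `(u,v)` gets weight
`1/min{d(u),d(v)}`. -/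
def mindegWeight (G : SimpleGraph V) (u v : V) : ℝ :=
  ((min (gdeg G u) (gdeg G v) : ℕ) : ℝ)⁻¹

/-- Transition probabilities of the minimum-degree weighted random walk. -/
def mindegP (G : SimpleGraph V) : V → V → ℝ := wP G (mindegWeight G)

end


/- ===== auxiliary development ===== -/

noncomputable section MindegAux

variable {V : Type*} [Fintype V] [DecidableEq V]

section Prob

variable (P : V → V → ℝ) (v : V)

lemma stepWeight_nonneg (hP : ∀ x y, 0 ≤ P x y) {t : ℕ} (f : Fin (t+1) → V) :
    0 ≤ stepWeight P f :=
  Finset.prod_nonneg fun i _ => hP _ _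

lemma eventProb_nonneg (hP : ∀ x y, 0 ≤ P x y) (x : V) (t : ℕ)
    (A : (Fin (t + 1) → V) → Prop) : 0 ≤ eventProb P x t A := by
  refine Finset.sum_nonneg fun f _ => ?_
  split_ifs
  · exact stepWeight_nonneg P hP f
  · exact le_refl 0

lemma eventProb_self (t : ℕ) :
    eventProb P v t (fun f => ∀ i, f i ≠ v) = 0 := by
  refine Finset.sum_eq_zero fun f _ => ?_
  rw [if_neg]
  rintro ⟨h1, h2⟩
  exact h2 0 h1

lemma eventProb_zero (x : V) (hx : x ≠ v) :
    eventProb P x 0 (fun f => ∀ i, f i ≠ v) = 1 := by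
  rw [eventProb]
  refine Eq.trans (Finset.sum_eq_single (fun _ => x) (fun g _ hg => ?_) (fun h => absurd (Finset.mem_univ _) h)) ?_
  · rw [if_neg]
    rintro ⟨h1, _⟩
    exact hg (funext fun i => by rw [Fin.fin_one_eq_zero i, h1])
  · rw [if_pos ⟨rfl, fun _ => hx⟩]
    simp [stepWeight]



lemma stepWeight_cons (a : V) {t : ℕ} (g : Fin (t+1) → V) :
    stepWeight P (Fin.cons a g) = P a (g 0) * stepWeight P g := by
  rw [stepWeight, stepWeight, Fin.prod_univ_succ]
  simp only [Fin.castSucc_zero, Fin.cons_zero, Fin.cons_succ, ← Fin.succ_castSucc]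

lemma eventProb_succ (x : V) (hx : x ≠ v) (t : ℕ) :
    eventProb P x (t+1) (fun f => ∀ i, f i ≠ v)
      = ∑ y, P x y * eventProb P y t (fun f => ∀ i, f i ≠ v) := by
  have key : eventProb P x (t+1) (fun f => ∀ i, f i ≠ v)
      = ∑ a : V, ∑ g : Fin (t+1) → V,
        (if a = x then (if (∀ i, g i ≠ v) then P a (g 0) * stepWeight P g else 0) else 0) := by
    rw [eventProb, ← Equiv.sum_comp (Fin.consEquiv (fun _ : Fin (t+1+1) => V)),
      Fintype.sum_prod_type]
    refine Finset.sum_congr rfl fun a _ => Finset.sum_congr rfl fun g _ => ?_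
    have hcons : (Fin.consEquiv fun _ : Fin (t+1+1) => V) (a, g) = Fin.cons a g := rfl
    rw [hcons]
    by_cases ha : a = x
    · by_cases hg : ∀ i : Fin (t+1), g i ≠ v
      · rw [if_pos, if_pos ha, if_pos hg, stepWeight_cons]
        refine ⟨by rw [Fin.cons_zero]; exact ha, fun i => ?_⟩
        refine Fin.cases ?_ ?_ i
        · rw [Fin.cons_zero, ha]; exact hx
        · intro j; rw [Fin.cons_succ]; exact hg j
      · rw [if_neg, if_pos ha, if_neg hg]
        rintro ⟨-, h2⟩
        exact hg fun i => by have := h2 i.succ; rwa [Fin.cons_succ] at this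
    · rw [if_neg, if_neg ha]
      rintro ⟨h1, -⟩
      rw [Fin.cons_zero] at h1
      exact ha h1
  rw [key]
  have collapse : ∀ a : V, (∑ g : Fin (t+1) → V,
      (if a = x then (if (∀ i, g i ≠ v) then P a (g 0) * stepWeight P g else 0) else 0))
      = if a = x then (∑ g : Fin (t+1) → V,
          (if (∀ i, g i ≠ v) then P a (g 0) * stepWeight P g else 0)) else 0 := by
    intro a
    split_ifs with h
    · rfl
    · exact Finset.sum_const_zero
  rw [Finset.sum_congr rfl fun a _ => collapse a, Finset.sum_ite_eq' Finset.univ x,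
    if_pos (Finset.mem_univ x)]
  -- now: ∑ g, (if ∀ i, g i ≠ v then P x (g 0) * stepWeight P g else 0) = RHS
  have rhs : ∀ y : V, P x y * eventProb P y t (fun f => ∀ i, f i ≠ v)
      = ∑ g : Fin (t+1) → V, (if g 0 = y ∧ (∀ i, g i ≠ v) then P x y * stepWeight P g else 0) := by
    intro y
    rw [eventProb, Finset.mul_sum]
    refine Finset.sum_congr rfl fun g _ => ?_
    rw [mul_ite, mul_zero]
    by_cases h : g 0 = y ∧ (∀ i : Fin (t+1), g i ≠ v)
    · rw [if_pos h, if_pos h]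
    · rw [if_neg h, if_neg h]
  rw [Finset.sum_congr rfl fun y _ => rhs y, Finset.sum_comm]
  refine Finset.sum_congr rfl fun g _ => ?_
  by_cases hA : ∀ i : Fin (t+1), g i ≠ v
  · rw [if_pos hA]
    have : ∀ y : V, (if g 0 = y ∧ (∀ i, g i ≠ v) then P x y * stepWeight P g else 0)
        = if g 0 = y then P x y * stepWeight P g else 0 := fun y =>
      if_congr (and_iff_left hA) rfl rfl
    rw [Finset.sum_congr rfl fun y _ => this y, Finset.sum_ite_eq Finset.univ (g 0),
      if_pos (Finset.mem_univ _)]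
  · rw [if_neg hA]
    refine (Finset.sum_eq_zero fun y _ => ?_).symm
    rw [if_neg]
    rintro ⟨-, h2⟩
    exact hA h2
lemma sum_range_eventProb_le (hP : ∀ x y, 0 ≤ P x y) (g : V → ℝ)
    (hg0 : ∀ x, 0 ≤ g x)
    (hgd : ∀ x, x ≠ v → 1 + ∑ y, P x y * g y ≤ g x) :
    ∀ (T : ℕ) (x : V),
      ∑ t ∈ Finset.range T, eventProb P x t (fun f => ∀ i, f i ≠ v) ≤ g x := by
  intro T
  induction T with
  | zero => intro x; simpa using hg0 x
  | succ T ih =>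
    intro x
    by_cases hx : x = v
    · subst hx
      rw [Finset.sum_congr rfl fun t _ => eventProb_self P x t]
      simpa using hg0 x
    · rw [Finset.sum_range_succ',
        Finset.sum_congr rfl (fun t (_ : t ∈ Finset.range T) => eventProb_succ P v x hx t),
        eventProb_zero P v x hx, Finset.sum_comm]
      have h1 : ∀ y : V, ∑ t ∈ Finset.range T, P x y * eventProb P y t (fun f => ∀ i, f i ≠ v)
          = P x y * ∑ t ∈ Finset.range T, eventProb P y t (fun f => ∀ i, f i ≠ v) :=
        fun y => (Finset.mul_sum _ _ _).symm
      rw [Finset.sum_congr rfl fun y _ => h1 y]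
      have h2 : ∑ y, P x y * (∑ t ∈ Finset.range T, eventProb P y t (fun f => ∀ i, f i ≠ v))
          ≤ ∑ y, P x y * g y :=
        Finset.sum_le_sum fun y _ => mul_le_mul_of_nonneg_left (ih y) (hP x y)
      have := hgd x hx
      linarith

lemma hitTime_le_of_supersolution (hP : ∀ x y, 0 ≤ P x y) (g : V → ℝ)
    (hg0 : ∀ x, 0 ≤ g x)
    (hgd : ∀ x, x ≠ v → 1 + ∑ y, P x y * g y ≤ g x) (u : V) :
    hitTime P u v ≤ ENNReal.ofReal (g u) := by
  rw [hitTime, ENNReal.tsum_eq_iSup_sum]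
  refine iSup_le fun s => ?_
  set N := s.sup id + 1 with hN
  have hsub : s ⊆ Finset.range N := fun i hi =>
    Finset.mem_range.mpr (Nat.lt_succ_of_le (Finset.le_sup (f := id) hi))
  refine le_trans (Finset.sum_le_sum_of_subset hsub) ?_
  have : ∑ t ∈ Finset.range N, ENNReal.ofReal (eventProb P u t (fun f => ∀ i, f i ≠ v))
      = ENNReal.ofReal (∑ t ∈ Finset.range N, eventProb P u t (fun f => ∀ i, f i ≠ v)) :=
    (ENNReal.ofReal_sum_of_nonneg fun t _ => eventProb_nonneg P hP u t _).symm
  rw [this]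
  exact ENNReal.ofReal_le_ofReal (sum_range_eventProb_le P v hP g hg0 hgd N u)

end Prob


variable (G : SimpleGraph V)

def mcond (G : SimpleGraph V) (x y : V) : ℝ :=
  if G.Adj x y then mindegWeight G x y else 0

def mwt (G : SimpleGraph V) (x : V) : ℝ := ∑ y, mcond G x y

variable (G : SimpleGraph V)

lemma gdeg_pos_of_adj {x y : V} (h : G.Adj x y) : 0 < gdeg G x :=
  Finset.card_pos.mpr ⟨y, Finset.mem_filter.mpr ⟨Finset.mem_univ y, h⟩⟩

lemma exists_adj (hG : G.Connected) (hc : 1 < Fintype.card V) (x : V) :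
    ∃ y, G.Adj x y := by
  have : Nontrivial V := Fintype.one_lt_card_iff_nontrivial.mp hc
  obtain ⟨y, hy⟩ := exists_ne x
  obtain ⟨p⟩ := hG.preconnected x y
  have hlen : 0 < p.length := by
    rcases Nat.eq_zero_or_pos p.length with h0 | h0
    · exact absurd (SimpleGraph.Walk.eq_of_length_eq_zero h0).symm hy
    · exact h0
  exact ⟨p.getVert 1, by simpa using p.adj_getVert_succ hlen⟩

lemma gdeg_pos (hG : G.Connected) (hc : 1 < Fintype.card V) (x : V) :
    0 < gdeg G x := by
  obtain ⟨y, hy⟩ := exists_adj G hG hc x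
  exact gdeg_pos_of_adj G hy

lemma mcond_nonneg (x y : V) : 0 ≤ mcond G x y := by
  rw [mcond]; split_ifs
  · rw [mindegWeight]; positivity
  · exact le_refl 0

lemma mcond_symm (x y : V) : mcond G x y = mcond G y x := by
  rw [mcond, mcond, mindegWeight, mindegWeight, min_comm]
  by_cases h : G.Adj x y
  · rw [if_pos h, if_pos h.symm]
  · rw [if_neg h, if_neg fun h' => h h'.symm]

lemma mcond_pos_of_adj {x y : V} (h : G.Adj x y) : 0 < mcond G x y := by
  rw [mcond, if_pos h, mindegWeight]
  have h1 : 0 < gdeg G x := gdeg_pos_of_adj G h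
  have h2 : 0 < gdeg G y := gdeg_pos_of_adj G h.symm
  have : 0 < min (gdeg G x) (gdeg G y) := lt_min h1 h2
  positivity

lemma mwt_nonneg (x : V) : 0 ≤ mwt G x :=
  Finset.sum_nonneg fun y _ => mcond_nonneg G x y

lemma mwt_pos (hG : G.Connected) (hc : 1 < Fintype.card V) (x : V) :
    0 < mwt G x := by
  obtain ⟨y, hy⟩ := exists_adj G hG hc x
  calc (0:ℝ) < mcond G x y := mcond_pos_of_adj G hy
  _ ≤ mwt G x := Finset.single_le_sum (fun z _ => mcond_nonneg G x z) (Finset.mem_univ y)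

lemma sum_mwt_le (hG : G.Connected) (hc : 1 < Fintype.card V) :
    ∑ x, mwt G x ≤ 2 * (Fintype.card V : ℝ) := by
  have key : ∀ x y : V, mcond G x y ≤
      (if G.Adj x y then ((gdeg G x : ℝ))⁻¹ else 0) +
      (if G.Adj x y then ((gdeg G y : ℝ))⁻¹ else 0) := by
    intro x y
    rw [mcond]
    split_ifs with h
    · rw [mindegWeight]
      have h1 : (0:ℝ) < gdeg G x := by exact_mod_cast gdeg_pos_of_adj G h
      have h2 : (0:ℝ) < gdeg G y := by exact_mod_cast gdeg_pos_of_adj G h.symm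
      rcases min_cases (gdeg G x) (gdeg G y) with ⟨hm, _⟩ | ⟨hm, _⟩ <;> rw [hm]
      · nlinarith [inv_pos.mpr h1, inv_pos.mpr h2]
      · nlinarith [inv_pos.mpr h1, inv_pos.mpr h2]
    · norm_num
  have row : ∀ x : V, ∑ y, (if G.Adj x y then ((gdeg G x : ℝ))⁻¹ else 0) = 1 := by
    intro x
    rw [← Finset.sum_filter]
    rw [Finset.sum_const]
    have : ((univ.filter (fun y => G.Adj x y)).card : ℝ) = (gdeg G x : ℝ) := by rw [gdeg]
    rw [nsmul_eq_mul, this]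
    have hx : (0:ℝ) < gdeg G x := by exact_mod_cast gdeg_pos G hG hc x
    field_simp
  calc ∑ x, mwt G x
      ≤ ∑ x, ∑ y, ((if G.Adj x y then ((gdeg G x : ℝ))⁻¹ else 0) +
        (if G.Adj x y then ((gdeg G y : ℝ))⁻¹ else 0)) := by
        refine Finset.sum_le_sum fun x _ => Finset.sum_le_sum fun y _ => key x y
    _ = ∑ x, ∑ y, (if G.Adj x y then ((gdeg G x : ℝ))⁻¹ else 0)
        + ∑ x, ∑ y, (if G.Adj x y then ((gdeg G y : ℝ))⁻¹ else 0) := by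
        rw [← Finset.sum_add_distrib]
        exact Finset.sum_congr rfl fun x _ => Finset.sum_add_distrib
    _ = (Fintype.card V : ℝ) + (Fintype.card V : ℝ) := by
        congr 1
        · rw [Finset.sum_congr rfl fun x _ => row x]
          simp [Finset.card_univ]
        · rw [Finset.sum_comm]
          have : ∀ y : V, ∑ x, (if G.Adj x y then ((gdeg G y : ℝ))⁻¹ else 0) = 1 := by
            intro y
            rw [Finset.sum_congr rfl (fun x _ => by rw [G.adj_comm]), row y]
          rw [Finset.sum_congr rfl fun y _ => this y]
          simp [Finset.card_univ]
    _ = 2 * (Fintype.card V : ℝ) := by ring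

/-- summation by parts for the Dirichlet energy -/
lemma energy_eq (h : V → ℝ) :
    ∑ x, ∑ y, mcond G x y * (h x - h y)^2
      = 2 * ∑ x, h x * (∑ y, mcond G x y * (h x - h y)) := by
  have expand : ∀ x y : V, mcond G x y * (h x - h y)^2
      = mcond G x y * (h x - h y) * h x - mcond G x y * (h x - h y) * h y := by
    intro x y; ring
  have swap : ∑ x, ∑ y, mcond G x y * (h x - h y) * h y
      = - ∑ x, ∑ y, mcond G x y * (h x - h y) * h x := by
    rw [Finset.sum_comm, ← Finset.sum_neg_distrib]
    refine Finset.sum_congr rfl fun y _ => ?_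
    rw [← Finset.sum_neg_distrib]
    refine Finset.sum_congr rfl fun x _ => ?_
    rw [mcond_symm]
    ring
  calc ∑ x, ∑ y, mcond G x y * (h x - h y)^2
      = ∑ x, ∑ y, (mcond G x y * (h x - h y) * h x - mcond G x y * (h x - h y) * h y) := by
        exact Finset.sum_congr rfl fun x _ => Finset.sum_congr rfl fun y _ => expand x y
    _ = ∑ x, ∑ y, mcond G x y * (h x - h y) * h x
        - ∑ x, ∑ y, mcond G x y * (h x - h y) * h y := by
        rw [← Finset.sum_sub_distrib]
        exact Finset.sum_congr rfl fun x _ => Finset.sum_sub_distrib _ _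
    _ = 2 * ∑ x, ∑ y, mcond G x y * (h x - h y) * h x := by rw [swap]; ring
    _ = 2 * ∑ x, h x * (∑ y, mcond G x y * (h x - h y)) := by
        congr 1
        refine Finset.sum_congr rfl fun x _ => ?_
        rw [Finset.mul_sum]
        exact Finset.sum_congr rfl fun y _ => by ring

lemma exists_solution (hG : G.Connected) (v : V) :
    ∃ h : V → ℝ, h v = 0 ∧ ∀ x, x ≠ v → ∑ y, mcond G x y * (h x - h y) = mwt G x := by
  set L : (V → ℝ) →ₗ[ℝ] (V → ℝ) :=
    { toFun := fun f x => if x = v then f v else ∑ y, mcond G x y * (f x - f y)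
      map_add' := by
        intro f g
        funext x
        by_cases hxv : x = v
        · simp [hxv]
        · simp only [Pi.add_apply, if_neg hxv]
          rw [← Finset.sum_add_distrib]
          exact Finset.sum_congr rfl fun y _ => by ring
      map_smul' := by
        intro r f
        funext x
        by_cases hxv : x = v
        · simp [hxv]
        · simp only [Pi.smul_apply, smul_eq_mul, RingHom.id_apply, if_neg hxv]
          rw [Finset.mul_sum]
          exact Finset.sum_congr rfl fun y _ => by ring } with hL
  have hinj : Function.Injective L := by
    rw [injective_iff_map_eq_zero]
    intro f hf
    have hfv : f v = 0 := by
      have := congrFun hf v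
      simpa [hL, LinearMap.coe_mk, AddHom.coe_mk] using this
    have hfx : ∀ x, x ≠ v → ∑ y, mcond G x y * (f x - f y) = 0 := by
      intro x hx
      have := congrFun hf x
      simpa [hL, LinearMap.coe_mk, AddHom.coe_mk, if_neg hx] using this
    have E0 : ∑ x, ∑ y, mcond G x y * (f x - f y)^2 = 0 := by
      rw [energy_eq]
      have : ∀ x : V, f x * (∑ y, mcond G x y * (f x - f y)) = 0 := by
        intro x
        by_cases hx : x = v
        · rw [hx, hfv]; ring
        · rw [hfx x hx]; ring
      rw [Finset.sum_congr rfl fun x _ => this x]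
      simp
    have term0 : ∀ x y : V, mcond G x y * (f x - f y)^2 = 0 := by
      intro x y
      have hnn : ∀ x y : V, 0 ≤ mcond G x y * (f x - f y)^2 := fun x y =>
        mul_nonneg (mcond_nonneg G x y) (sq_nonneg _)
      have hrow : ∀ x ∈ (univ : Finset V), ∑ y, mcond G x y * (f x - f y)^2 = 0 := by
        have := (Finset.sum_eq_zero_iff_of_nonneg
          (fun x _ => Finset.sum_nonneg fun y _ => hnn x y)).mp E0
        exact this
      exact (Finset.sum_eq_zero_iff_of_nonneg (fun y _ => hnn x y)).mp
        (hrow x (Finset.mem_univ x)) y (Finset.mem_univ y)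
    have hedge : ∀ x y : V, G.Adj x y → f x = f y := by
      intro x y hxy
      have hc := mcond_pos_of_adj G hxy
      have hsq : (f x - f y)^2 = 0 := by
        rcases mul_eq_zero.mp (term0 x y) with h | h
        · exact absurd h (ne_of_gt hc)
        · exact h
      have := sq_eq_zero_iff.mp hsq
      linarith
    have walkeq : ∀ (a b : V) (p : G.Walk a b), f a = f b := by
      intro a b p
      induction p with
      | nil => rfl
      | cons hadj q ih => rw [hedge _ _ hadj]; exact ih
    have hconst : ∀ x : V, f x = f v := by
      intro x
      obtain ⟨p⟩ := hG.preconnected x v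
      exact walkeq x v p
    funext x
    rw [hconst x, hfv]; rfl
  have hsurj : Function.Surjective L := by
    exact (LinearMap.injective_iff_surjective).mp hinj
  obtain ⟨h, hh⟩ := hsurj (fun x => if x = v then 0 else mwt G x)
  refine ⟨h, ?_, ?_⟩
  · have := congrFun hh v
    simpa [hL, LinearMap.coe_mk, AddHom.coe_mk] using this
  · intro x hx
    have := congrFun hh x
    simpa [hL, LinearMap.coe_mk, AddHom.coe_mk, if_neg hx] using this

lemma exists_geodesic (hG : G.Connected) {a v : V} (hav : a ≠ v) :
    ∃ (k : ℕ) (x : ℕ → V), x 0 = a ∧ x k = v ∧ (∀ i, i < k → G.Adj (x i) (x (i+1))) ∧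
      (∀ i, i ≤ k → ∀ j, j ≤ k → x i = x j → i = j) ∧
      ((∑ i ∈ Finset.range k, (min (gdeg G (x i)) (gdeg G (x (i+1))) : ℕ))
        ≤ 3 * Fintype.card V) := by
  obtain ⟨p, hp⟩ := hG.exists_walk_length_eq_dist a v
  set k := G.dist a v with hk
  set x : ℕ → V := p.getVert with hx
  have hx0 : x 0 = a := p.getVert_zero
  have hxk : x k = v := by
    rw [hx, ← hp]; exact p.getVert_length
  have hadj : ∀ i, i < k → G.Adj (x i) (x (i+1)) := by
    intro i hi
    exact p.adj_getVert_succ (by rw [hp]; exact hi)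
  have dist_le : ∀ i, i ≤ k → G.dist a (x i) ≤ i := by
    intro i
    induction i with
    | zero => intro _; rw [hx0]; simp
    | succ i ih =>
      intro hik
      have h1 : G.dist a (x i) ≤ i := ih (Nat.le_of_succ_le hik)
      have h2 : G.dist (x i) (x (i+1)) = 1 :=
        SimpleGraph.dist_eq_one_iff_adj.mpr (hadj i hik)
      calc G.dist a (x (i+1)) ≤ G.dist a (x i) + G.dist (x i) (x (i+1)) :=
            hG.dist_triangle
        _ ≤ i + 1 := by omega
  have dist_to : ∀ j, j ≤ k → G.dist (x (k - j)) v ≤ j := by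
    intro j
    induction j with
    | zero => intro _; simp [hxk]
    | succ j ih =>
      intro hjk
      have h1 : G.dist (x (k - j)) v ≤ j := ih (Nat.le_of_succ_le hjk)
      have hlt : k - (j+1) < k := by omega
      have heq : k - (j+1) + 1 = k - j := by omega
      have h2 : G.dist (x (k - (j+1))) (x (k - j)) = 1 := by
        rw [← heq]
        exact SimpleGraph.dist_eq_one_iff_adj.mpr (hadj _ hlt)
      calc G.dist (x (k - (j+1))) v
          ≤ G.dist (x (k - (j+1))) (x (k - j)) + G.dist (x (k - j)) v :=
            hG.dist_triangle
        _ ≤ j + 1 := by omega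
  have dist_eq : ∀ i, i ≤ k → G.dist a (x i) = i := by
    intro i hik
    have h1 : G.dist a (x i) ≤ i := dist_le i hik
    have h2 : G.dist (x i) v ≤ k - i := by
      have := dist_to (k - i) (by omega)
      rwa [Nat.sub_sub_self hik] at this
    have h3 : k ≤ G.dist a (x i) + G.dist (x i) v := by
      rw [hk]; exact hG.dist_triangle
    omega
  have hinj : ∀ i, i ≤ k → ∀ j, j ≤ k → x i = x j → i = j := by
    intro i hi j hj hxij
    have := dist_eq i hi
    rw [hxij, dist_eq j hj] at this
    omega
  refine ⟨k, x, hx0, hxk, hadj, hinj, ?_⟩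
  set nbhd : ℕ → Finset V := fun i => Finset.univ.filter (fun y => G.Adj (x i) y)
    with hnbhd
  have hdisj : ∀ i, i ≤ k → ∀ j, j ≤ k → i + 3 ≤ j → Disjoint (nbhd i) (nbhd j) := by
    intro i hi j hj hij
    rw [Finset.disjoint_left]
    intro y hyi hyj
    have hyi' : G.Adj (x i) y := (Finset.mem_filter.mp hyi).2
    have hyj' : G.Adj (x j) y := (Finset.mem_filter.mp hyj).2
    have d1 : G.dist a y ≤ i + 1 := by
      calc G.dist a y ≤ G.dist a (x i) + G.dist (x i) y := hG.dist_triangle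
        _ ≤ i + 1 := by
          rw [dist_eq i hi, SimpleGraph.dist_eq_one_iff_adj.mpr hyi']
    have d2 : (j : ℕ) ≤ G.dist a y + 1 := by
      rw [← dist_eq j hj]
      calc G.dist a (x j) ≤ G.dist a y + G.dist y (x j) := hG.dist_triangle
        _ ≤ G.dist a y + 1 := by
          rw [SimpleGraph.dist_eq_one_iff_adj.mpr hyj'.symm]
    omega
  have deg_sum : ∑ i ∈ Finset.range (k+1), gdeg G (x i) ≤ 3 * Fintype.card V := by
    have fib : ∑ r ∈ Finset.range 3, ∑ i ∈ (Finset.range (k+1)).filter (fun i => i % 3 = r),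
        gdeg G (x i) = ∑ i ∈ Finset.range (k+1), gdeg G (x i) :=
      Finset.sum_fiberwise_of_maps_to
        (fun i _ => Finset.mem_range.mpr (Nat.mod_lt _ (by norm_num))) _
    rw [← fib]
    have per : ∀ r, ∑ i ∈ (Finset.range (k+1)).filter (fun i => i % 3 = r), gdeg G (x i)
        ≤ Fintype.card V := by
      intro r
      set s := (Finset.range (k+1)).filter (fun i => i % 3 = r) with hs
      have hpair : ∀ i ∈ s, ∀ j ∈ s, i ≠ j → Disjoint (nbhd i) (nbhd j) := by
        intro i hi j hj hne
        obtain ⟨hi1, hi2⟩ := Finset.mem_filter.mp hi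
        obtain ⟨hj1, hj2⟩ := Finset.mem_filter.mp hj
        have hik : i ≤ k := by have := Finset.mem_range.mp hi1; omega
        have hjk : j ≤ k := by have := Finset.mem_range.mp hj1; omega
        rcases Nat.lt_or_ge i j with hlt | hge
        · exact hdisj i hik j hjk (by omega)
        · exact (hdisj j hjk i hik (by omega)).symm
      have hcard : ∑ i ∈ s, gdeg G (x i) = (s.biUnion (fun i => nbhd i)).card := by
        rw [Finset.card_biUnion hpair]
        exact Finset.sum_congr rfl fun i _ => rfl
      calc ∑ i ∈ s, gdeg G (x i) = (s.biUnion (fun i => nbhd i)).card := hcard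
        _ ≤ (Finset.univ : Finset V).card := Finset.card_le_univ _
        _ = Fintype.card V := Finset.card_univ
    calc ∑ r ∈ Finset.range 3, ∑ i ∈ (Finset.range (k+1)).filter (fun i => i % 3 = r),
          gdeg G (x i) ≤ ∑ _r ∈ Finset.range 3, Fintype.card V :=
          Finset.sum_le_sum fun r _ => per r
      _ = 3 * Fintype.card V := by
          simp [Finset.sum_const, Finset.card_range]
  calc ∑ i ∈ Finset.range k, (min (gdeg G (x i)) (gdeg G (x (i+1))) : ℕ)
      ≤ ∑ i ∈ Finset.range k, gdeg G (x i) :=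
        Finset.sum_le_sum fun i _ => min_le_left _ _
    _ ≤ ∑ i ∈ Finset.range (k+1), gdeg G (x i) :=
        Finset.sum_le_sum_of_subset (Finset.range_subset_range.mpr (Nat.le_succ k))
    _ ≤ 3 * Fintype.card V := deg_sum

lemma solution_nonneg (hG : G.Connected) (hc : 1 < Fintype.card V) (v : V) (h : V → ℝ)
    (hv : h v = 0) (heq : ∀ x, x ≠ v → ∑ y, mcond G x y * (h x - h y) = mwt G x) :
    ∀ x, 0 ≤ h x := by
  obtain ⟨x0, -, hx0⟩ := Finset.exists_min_image Finset.univ h ⟨v, Finset.mem_univ v⟩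
  intro x
  have hmin : ∀ y : V, h x0 ≤ h y := fun y => hx0 y (Finset.mem_univ y)
  by_contra hneg
  push_neg at hneg
  have hx0neg : h x0 < 0 := lt_of_le_of_lt (hmin x) hneg
  have hx0v : x0 ≠ v := fun he => by rw [he, hv] at hx0neg; exact lt_irrefl 0 hx0neg
  have := heq x0 hx0v
  have hle : ∑ y, mcond G x0 y * (h x0 - h y) ≤ 0 :=
    Finset.sum_nonpos fun y _ =>
      mul_nonpos_of_nonneg_of_nonpos (mcond_nonneg G x0 y) (by linarith [hmin y])
  linarith [mwt_pos G hG hc x0]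

lemma solution_le (hG : G.Connected) (hc : 1 < Fintype.card V) (v : V) (h : V → ℝ)
    (hv : h v = 0) (heq : ∀ x, x ≠ v → ∑ y, mcond G x y * (h x - h y) = mwt G x) :
    ∀ u, h u ≤ 6 * (Fintype.card V : ℝ)^2 := by
  have hn0 : (0:ℝ) ≤ (Fintype.card V : ℝ) := Nat.cast_nonneg _
  obtain ⟨z, -, hz⟩ := Finset.exists_max_image Finset.univ h ⟨v, Finset.mem_univ v⟩
  have hmax : ∀ y : V, h y ≤ h z := fun y => hz y (Finset.mem_univ y)
  set M := h z with hM
  have hM0 : 0 ≤ M := by rw [hM, ← hv]; exact hmax v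
  suffices hMle : M ≤ 6 * (Fintype.card V : ℝ)^2 by
    intro u; exact le_trans (hmax u) hMle
  by_cases hzv : z = v
  · rw [hM, hzv, hv]; positivity
  obtain ⟨k, x, hx0, hxk, hadj, hinj, hdeg⟩ := exists_geodesic G hG hzv
  set r : ℕ → ℝ := fun i => ((min (gdeg G (x i)) (gdeg G (x (i+1))) : ℕ) : ℝ) with hr
  have hr1 : ∀ i, i < k → 1 ≤ r i := by
    intro i hi
    have h1 := gdeg_pos_of_adj G (hadj i hi)
    have h2 := gdeg_pos_of_adj G (hadj i hi).symm
    have h3 : 1 ≤ min (gdeg G (x i)) (gdeg G (x (i+1))) := le_min h1 h2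
    show (1:ℝ) ≤ ((min (gdeg G (x i)) (gdeg G (x (i+1))) : ℕ) : ℝ)
    exact_mod_cast h3
  have hrc : ∀ i, i < k → mcond G (x i) (x (i+1)) = (r i)⁻¹ := by
    intro i hi
    rw [mcond, if_pos (hadj i hi), mindegWeight, hr]
  -- telescoping
  have tele : M = ∑ i ∈ Finset.range k, (h (x i) - h (x (i+1))) := by
    rw [Finset.sum_range_sub' (fun i => h (x i)) k, hx0, hxk, hv, hM]; ring
  -- Cauchy-Schwarz
  have CS : M^2 ≤ (∑ i ∈ Finset.range k, r i)
      * (∑ i ∈ Finset.range k, (r i)⁻¹ * (h (x i) - h (x (i+1)))^2) := by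
    have := Finset.sum_mul_sq_le_sq_mul_sq (Finset.range k)
      (fun i => Real.sqrt (r i))
      (fun i => (h (x i) - h (x (i+1))) / Real.sqrt (r i))
    have e1 : ∀ i ∈ Finset.range k,
        Real.sqrt (r i) * ((h (x i) - h (x (i+1))) / Real.sqrt (r i))
          = h (x i) - h (x (i+1)) := by
      intro i hi
      have : Real.sqrt (r i) ≠ 0 := by
        have := hr1 i (Finset.mem_range.mp hi)
        positivity
      field_simp
    have e2 : ∀ i ∈ Finset.range k, (Real.sqrt (r i))^2 = r i := by
      intro i hi
      exact Real.sq_sqrt (by linarith [hr1 i (Finset.mem_range.mp hi)])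
    have e3 : ∀ i ∈ Finset.range k,
        ((h (x i) - h (x (i+1))) / Real.sqrt (r i))^2
          = (r i)⁻¹ * (h (x i) - h (x (i+1)))^2 := by
      intro i hi
      rw [div_pow, Real.sq_sqrt (by linarith [hr1 i (Finset.mem_range.mp hi)])]
      ring
    rw [Finset.sum_congr rfl e1, Finset.sum_congr rfl e2, Finset.sum_congr rfl e3] at this
    rw [tele]
    exact this
  -- sum of resistances
  have hrsum : ∑ i ∈ Finset.range k, r i ≤ 3 * (Fintype.card V : ℝ) := by
    rw [hr]
    push_cast [← Nat.cast_sum]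
    exact_mod_cast hdeg
  -- energy bound
  set D := ∑ a, ∑ b, mcond G a b * (h a - h b)^2 with hD
  have hSD : 2 * (∑ i ∈ Finset.range k, (r i)⁻¹ * (h (x i) - h (x (i+1)))^2) ≤ D := by
    set F : V × V → ℝ := fun p => mcond G p.1 p.2 * (h p.1 - h p.2)^2 with hF
    have hFnn : ∀ p : V × V, 0 ≤ F p := fun p =>
      mul_nonneg (mcond_nonneg G _ _) (sq_nonneg _)
    set s₁ := (Finset.range k).image (fun i => (x i, x (i+1))) with hs₁
    set s₂ := (Finset.range k).image (fun i => (x (i+1), x i)) with hs₂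
    have inj1 : ∀ i ∈ Finset.range k, ∀ j ∈ Finset.range k,
        (x i, x (i+1)) = (x j, x (j+1)) → i = j := by
      intro i hi j hj he
      have hi' := Finset.mem_range.mp hi
      have hj' := Finset.mem_range.mp hj
      exact hinj i (by omega) j (by omega) (congrArg Prod.fst he)
    have inj2 : ∀ i ∈ Finset.range k, ∀ j ∈ Finset.range k,
        (x (i+1), x i) = (x (j+1), x j) → i = j := by
      intro i hi j hj he
      have hi' := Finset.mem_range.mp hi
      have hj' := Finset.mem_range.mp hj
      have := hinj (i+1) (by omega) (j+1) (by omega) (congrArg Prod.fst he)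
      omega
    have hdisj : Disjoint s₁ s₂ := by
      rw [Finset.disjoint_left]
      rintro p hp1 hp2
      rw [hs₁, Finset.mem_image] at hp1
      rw [hs₂, Finset.mem_image] at hp2
      obtain ⟨i, hi, hip⟩ := hp1
      obtain ⟨j, hj, hjp⟩ := hp2
      have hi' := Finset.mem_range.mp hi
      have hj' := Finset.mem_range.mp hj
      rw [← hjp] at hip
      have e1 : x i = x (j+1) := congrArg Prod.fst hip
      have e2 : x (i+1) = x j := congrArg Prod.snd hip
      have := hinj i (by omega) (j+1) (by omega) e1
      have := hinj (i+1) (by omega) j (by omega) e2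
      omega
    have sum1 : ∑ p ∈ s₁, F p = ∑ i ∈ Finset.range k, F (x i, x (i+1)) :=
      Finset.sum_image inj1
    have sum2 : ∑ p ∈ s₂, F p = ∑ i ∈ Finset.range k, F (x (i+1), x i) :=
      Finset.sum_image inj2
    have symmF : ∀ i, F (x (i+1), x i) = F (x i, x (i+1)) := by
      intro i
      rw [hF]
      simp only
      rw [mcond_symm]
      ring
    have union_le : ∑ p ∈ s₁ ∪ s₂, F p ≤ D := by
      have : D = ∑ p : V × V, F p := by
        rw [hD, hF, Fintype.sum_prod_type]
      rw [this]
      exact Finset.sum_le_sum_of_subset_of_nonneg (Finset.subset_univ _)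
        (fun p _ _ => hFnn p)
    rw [Finset.sum_union hdisj, sum1, sum2, Finset.sum_congr rfl fun i _ => symmF i]
      at union_le
    have rwF : ∀ i ∈ Finset.range k,
        F (x i, x (i+1)) = (r i)⁻¹ * (h (x i) - h (x (i+1)))^2 := by
      intro i hi
      rw [hF]
      simp only
      rw [hrc i (Finset.mem_range.mp hi)]
    rw [Finset.sum_congr rfl rwF] at union_le
    linarith
  have hDle : D ≤ 2 * M * (2 * (Fintype.card V : ℝ)) := by
    rw [hD, energy_eq G h]
    have step : ∀ a : V, h a * (∑ y, mcond G a y * (h a - h y)) ≤ M * mwt G a := by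
      intro a
      by_cases hav : a = v
      · rw [hav, hv]
        simpa using mul_nonneg hM0 (mwt_nonneg G v)
      · rw [heq a hav]
        exact mul_le_mul_of_nonneg_right (hmax a) (mwt_nonneg G a)
    calc 2 * ∑ a, h a * (∑ y, mcond G a y * (h a - h y))
        ≤ 2 * ∑ a, M * mwt G a := by
          have := Finset.sum_le_sum fun a (_ : a ∈ Finset.univ) => step a
          linarith
      _ = 2 * (M * ∑ a, mwt G a) := by rw [← Finset.mul_sum]
      _ ≤ 2 * (M * (2 * (Fintype.card V : ℝ))) := by
          have := sum_mwt_le G hG hc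
          nlinarith
      _ = 2 * M * (2 * (Fintype.card V : ℝ)) := by ring
  -- combine
  have hS0 : 0 ≤ ∑ i ∈ Finset.range k, (r i)⁻¹ * (h (x i) - h (x (i+1)))^2 :=
    Finset.sum_nonneg fun i hi =>
      mul_nonneg (by have := hr1 i (Finset.mem_range.mp hi); positivity) (sq_nonneg _)
  have hr0 : 0 ≤ ∑ i ∈ Finset.range k, r i :=
    Finset.sum_nonneg fun i hi => by
      have := hr1 i (Finset.mem_range.mp hi); linarith
  have key : M^2 ≤ 6 * (Fintype.card V : ℝ)^2 * M := by
    calc M^2 ≤ (∑ i ∈ Finset.range k, r i)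
        * (∑ i ∈ Finset.range k, (r i)⁻¹ * (h (x i) - h (x (i+1)))^2) := CS
      _ ≤ (3 * (Fintype.card V : ℝ)) * (2 * M * (Fintype.card V : ℝ)) := by
          have h1 : (∑ i ∈ Finset.range k, (r i)⁻¹ * (h (x i) - h (x (i+1)))^2)
              ≤ 2 * M * (Fintype.card V : ℝ) := by linarith
          exact mul_le_mul hrsum h1 hS0 (by positivity)
      _ = 6 * (Fintype.card V : ℝ)^2 * M := by ring
  rcases eq_or_lt_of_le hM0 with hMz | hMpos
  · rw [← hMz]; positivity
  · have : M * M ≤ 6 * (Fintype.card V : ℝ)^2 * M := by nlinarith [key]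
    exact le_of_mul_le_mul_right (by linarith) hMpos

lemma mindegP_eq (x y : V) : mindegP G x y = mcond G x y / mwt G x := rfl

lemma mindegP_nonneg (x y : V) : 0 ≤ mindegP G x y := by
  rw [mindegP_eq]
  exact div_nonneg (mcond_nonneg G x y) (mwt_nonneg G x)

lemma drift (hG : G.Connected) (hc : 1 < Fintype.card V) (v : V) (h : V → ℝ)
    (heq : ∀ x, x ≠ v → ∑ y, mcond G x y * (h x - h y) = mwt G x) :
    ∀ x, x ≠ v → 1 + ∑ y, mindegP G x y * h y ≤ h x := by
  intro x hx
  have hw := mwt_pos G hG hc x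
  have expand : ∑ y, mcond G x y * (h x - h y)
      = mwt G x * h x - ∑ y, mcond G x y * h y := by
    rw [mwt, Finset.sum_mul, ← Finset.sum_sub_distrib]
    exact Finset.sum_congr rfl fun y _ => by ring
  have hsum : ∑ y, mcond G x y * h y = mwt G x * h x - mwt G x := by
    have := heq x hx
    rw [expand] at this
    linarith
  have hPsum : ∑ y, mindegP G x y * h y = (∑ y, mcond G x y * h y) / mwt G x := by
    have e : ∑ y, mindegP G x y * h y = ∑ y, (mcond G x y * h y) / mwt G x :=
      Finset.sum_congr rfl fun y _ => by rw [mindegP_eq, div_mul_eq_mul_div]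
    rw [e, ← Finset.sum_div]
  rw [hPsum, hsum]
  rw [sub_div, mul_div_assoc, div_self (ne_of_gt hw)]
  field_simp
  linarith

end MindegAux

/-- For a finite, simple, connected graph `G` on `n` vertices weighted
with the minimum-degree weighting scheme, `H[u,v] ≤ 6n²` for all vertices `u, v`. -/
theorem mindeg_hitTime_le
    {V : Type*} [Fintype V] [DecidableEq V] (G : SimpleGraph V) (hG : G.Connected)
    (u v : V) :
    hitTime (mindegP G) u v ≤ ENNReal.ofReal (6 * (Fintype.card V : ℝ) ^ 2) := by
  by_cases huv : u = v
  · subst huv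
    rw [hitTime]
    have hz : ∀ t : ℕ, eventProb (mindegP G) u t (fun f => ∀ i, f i ≠ u) = 0 :=
      fun t => eventProb_self (mindegP G) u t
    simp only [hz, ENNReal.ofReal_zero, tsum_zero]
    exact zero_le
  · have hc : 1 < Fintype.card V := Fintype.one_lt_card_iff_nontrivial.mpr ⟨⟨u, v, huv⟩⟩
    obtain ⟨h, hv0, heq⟩ := exists_solution G hG v
    have hnn := solution_nonneg G hG hc v h hv0 heq
    have hle := solution_le G hG hc v h hv0 heq
    have hdrift := drift G hG hc v h heq
    have hmain := hitTime_le_of_supersolution (mindegP G) v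
      (mindegP_nonneg G) h hnn hdrift u
    exact le_trans hmain (ENNReal.ofReal_le_ofReal (hle u))
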